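/- For the polynomial algebra R = k[X₁,…,X_N], the action of a labeled tree T ∈ kLT(𝔇) on s ∈ R defined by T·s = Σ_{μ₁,…,μ_m} R(m)⋯R(1)R(0) — where the non-root nodes of T are labeled with derivations E_i = Σ_{μ_i} r_{iμ_i} ∂/∂X_{μ_i}, and R(i) = ∂_{X_{μ_{j_k}}}⋯∂_{X_{μ_{j_1}}} applied to r_{iμ_i} (or to s when i = 0 is the root), with j₁,…,j_k the children of node i — makes R into a left kLT(𝔇)-module algebra. -/

import Mathlib

/-- An ordered labeled subtree: a node with a label and an ordered list of children. -/
inductive LSub (D : Type) : Type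
  | mk : D → List (LSub D) → LSub D

/-- An ordered rooted tree with unlabeled root and non-root nodes labeled in `D`,
represented by the list of subtrees attached to the root. -/
abbrev LTree (D : Type) := List (LSub D)

mutual
  /-- Number of nodes of a labeled subtree. -/
  def sizeS {D : Type} : LSub D → Nat
    | .mk _ ts => 1 + sizeL ts
  /-- Total number of (labeled) nodes of a forest. -/
  def sizeL {D : Type} : List (LSub D) → Nat
    | [] => 0
    | t :: ts => sizeS t + sizeL ts
end

mutual
  /-- Graft pending subtrees (given by `f`, indexed by the preorder index of nodes)
  onto a subtree whose own preorder index is `i`; attached subtrees are prepended. -/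
  def graftS {D : Type} (f : Nat → List (LSub D)) (i : Nat) : LSub D → LSub D
    | .mk d ts => .mk d (f i ++ graftL f (i + 1) ts)
  def graftL {D : Type} (f : Nat → List (LSub D)) (i : Nat) : List (LSub D) → List (LSub D)
    | [] => []
    | t :: ts => graftS f i t :: graftL f (i + sizeS t) ts
end

/-- Graft pending subtrees onto a tree; the root has preorder index `0`. -/
def graft {D : Type} (f : Nat → List (LSub D)) (t : LTree D) : LTree D :=
  f 0 ++ graftL f 1 t

/-- All lists of length `m` with entries `< n` (choices of attachment nodes). -/
def choices : Nat → Nat → List (List Nat)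
  | 0, _ => [[]]
  | m + 1, n => (List.range n).flatMap fun c => (choices m n).map (c :: ·)

/-- The Grossman–Larson product of two basis trees, as an element of the free module:
the sum over all ways of attaching the root-subtrees of `T1` to nodes of `T2`. -/
noncomputable def mulT (k : Type) [Semiring k] {D : Type} (T1 T2 : LTree D) :
    LTree D →₀ k :=
  ((choices T1.length (1 + sizeL T2)).map fun c =>
    Finsupp.single
      (graft (fun i => (T1.zip c).filterMap fun p => if p.2 = i then some p.1 else none) T2)
      (1 : k)).sum

/-- `v E`: the two-node tree whose single non-root node is labeled `E`. -/
def vT {D : Type} (E : D) : LTree D := [.mk E []]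

/-- `u(E; T₁,…,T_k)`: root has one child labeled `E`, with which the roots of the `Tᵢ`
are identified. -/
def uT {D : Type} (E : D) (Ts : List (LTree D)) : LTree D := [.mk E Ts.flatten]

/-- `t(T₁,…,T_k)`: identify the roots of the `Tᵢ`. -/
def tT {D : Type} (Ts : List (LTree D)) : LTree D := Ts.flatten

/-- All decompositions of an ordered multiset into a sub-multiset and its complement
(used for the coproduct). -/
def splits {α : Type} : List α → List (List α × List α)
  | [] => [([], [])]
  | a :: l => ((splits l).map fun p => (a :: p.1, p.2)) ++ ((splits l).map fun p => (p.1, a :: p.2))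

/-- The labeled node of `T` at position `(i, p)`: the `i`-th root-subtree, then follow
the path `p` of child indices. -/
def subAtL {D : Type} : List (LSub D) → Nat → List Nat → Option (LSub D)
  | [], _, _ => none
  | t :: _, 0, [] => some t
  | .mk _ cs :: _, 0, j :: p => subAtL cs j p
  | _ :: ts, i + 1, p => subAtL ts i p

/-- Replace the node of `T` at position `(i, p)`: relabel it with `G` and replace the
subtree rooted there (its list of children) by `T'`. -/
def replaceAtL {D : Type} (G : D) (T' : List (LSub D)) :
    List (LSub D) → Nat → List Nat → List (LSub D)
  | [], _, _ => []
  | _ :: ts, 0, [] => .mk G T' :: ts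
  | .mk d cs :: ts, 0, j :: p => .mk d (replaceAtL G T' cs j p) :: ts
  | t :: ts, i + 1, p => t :: replaceAtL G T' ts i p

mutual
  /-- The action of a forest (the root-subtrees of a labeled tree) on a polynomial
  `f ∈ k[X₁,…,X_N]`: `T · s = Σ_{μ₁,…,μ_m} R(m) ⋯ R(1) R(0)` where each non-root node
  `i` labeled `E_i = Σ_μ r_{iμ} ∂/∂X_μ` contributes the mixed partial derivative of its
  coefficient `r_{iμᵢ}` with respect to the indices of its children, and the root factor
  is the corresponding mixed partial derivative of `s`. -/
  noncomputable def actP {k : Type} [Field k] {N : ℕ} :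
      List (LSub (Derivation k (MvPolynomial (Fin N) k) (MvPolynomial (Fin N) k))) →
        MvPolynomial (Fin N) k → MvPolynomial (Fin N) k
    | [], f => f
    | c :: cs, f => ∑ μ : Fin N, coeffP c μ * actP cs ((MvPolynomial.pderiv μ) f)
  /-- The coefficient contributed by a non-root node labeled `E` with children `cs`,
  for the summation index `μ`: the children's mixed partials applied to `E(X_μ)`. -/
  noncomputable def coeffP {k : Type} [Field k] {N : ℕ} :
      LSub (Derivation k (MvPolynomial (Fin N) k) (MvPolynomial (Fin N) k)) →
        Fin N → MvPolynomial (Fin N) k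
    | .mk E cs, μ => actP cs (E (MvPolynomial.X μ))
end

open MvPolynomial

/-! ### Generic sum helpers -/

lemma sum_map_flatMap {α β M : Type*} [AddCommMonoid M] (l : List α) (g : α → List β)
    (F : β → M) : ((l.flatMap g).map F).sum = (l.map fun x => ((g x).map F).sum).sum := by
  induction l with
  | nil => simp
  | cons a l ih => simp [List.flatMap_cons, ih]

lemma sum_map_finsum {α γ M : Type*} [AddCommMonoid M] (l : List α) (s : Finset γ)
    (F : α → γ → M) :
    (l.map fun x => ∑ μ ∈ s, F x μ).sum = ∑ μ ∈ s, (l.map fun x => F x μ).sum := by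
  induction l with
  | nil => simp
  | cons a l ih => simp [ih, Finset.sum_add_distrib]

lemma sum_map_swap {α β M : Type*} [AddCommMonoid M] (l1 : List α) (l2 : List β)
    (F : α → β → M) :
    (l1.map fun x => (l2.map fun y => F x y).sum).sum
      = (l2.map fun y => (l1.map fun x => F x y).sum).sum := by
  induction l1 with
  | nil => simp
  | cons a l ih => simp [ih, List.sum_map_add]

section
variable {k : Type} [Field k] {N : ℕ}
local notation "RR" => MvPolynomial (Fin N) k
local notation "SS" => LSub (Derivation k (MvPolynomial (Fin N) k) (MvPolynomial (Fin N) k))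

@[simp] lemma actP_nil (f : RR) : actP [] f = f := by simp [actP]

lemma actP_cons (c : SS) (cs : List SS) (f : RR) :
    actP (c :: cs) f = ∑ μ : Fin N, coeffP c μ * actP cs (pderiv μ f) := by
  simp [actP]

lemma coeffP_mk (E : Derivation k (MvPolynomial (Fin N) k) (MvPolynomial (Fin N) k))
    (ts : List SS) (μ : Fin N) : coeffP (.mk E ts) μ = actP ts (E (X μ)) := by
  simp [coeffP]

lemma actP_add (cs : List SS) (f g : RR) : actP cs (f + g) = actP cs f + actP cs g := by
  induction cs generalizing f g with
  | nil => simp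
  | cons c cs ih => simp [actP_cons, map_add, ih, mul_add, Finset.sum_add_distrib]

lemma actP_zero (cs : List SS) : actP cs (0 : RR) = 0 := by
  induction cs with
  | nil => simp
  | cons c cs ih => simp [actP_cons, map_zero, ih]

lemma actP_smul (cs : List SS) (a : k) (f : RR) : actP cs (a • f) = a • actP cs f := by
  induction cs generalizing f with
  | nil => simp
  | cons c cs ih =>
    simp [actP_cons, map_smul, ih, Finset.smul_sum, mul_smul_comm]

noncomputable def actHom (cs : List SS) : MvPolynomial (Fin N) k →+ MvPolynomial (Fin N) k where
  toFun := actP cs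
  map_zero' := actP_zero cs
  map_add' := actP_add cs

lemma actP_finsum {γ : Type*} (cs : List SS) (s : Finset γ) (F : γ → RR) :
    actP cs (∑ μ ∈ s, F μ) = ∑ μ ∈ s, actP cs (F μ) :=
  map_sum (actHom cs) F s

lemma pderiv_comm' (μ ν : Fin N) (f : RR) :
    pderiv μ (pderiv ν f) = pderiv ν (pderiv μ f) := by
  induction f using MvPolynomial.induction_on with
  | C a => simp
  | add f g hf hg => simp [hf, hg]
  | mul_X f i hf =>
    have h2 : ∀ α β : Fin N, pderiv α (pderiv β (X i : RR)) = 0 := by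
      intro α β
      by_cases h : i = β
      · subst h; simp [pderiv_X_self]
      · simp [pderiv_X_of_ne h]
    simp only [pderiv_mul, map_add, hf, h2]
    ring

lemma actP_mul (T : List SS) (f g : RR) :
    actP T (f * g) = ((splits T).map fun q => actP q.1 f * actP q.2 g).sum := by
  induction T generalizing f g with
  | nil => simp [splits]
  | cons c cs ih =>
    have e : ∀ u v : RR,
        ((splits cs).map fun p => actP (c :: p.1) u * actP p.2 v).sum
          = ∑ μ : Fin N, coeffP c μ * actP cs (pderiv μ u * v) := by
      intro u v
      simp only [actP_cons, Finset.sum_mul]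
      rw [sum_map_finsum]
      refine Finset.sum_congr rfl fun μ _ => ?_
      simp only [mul_assoc]
      rw [List.sum_map_mul_left, ← ih]
    have e2 : ∀ u v : RR,
        ((splits cs).map fun p => actP p.1 u * actP (c :: p.2) v).sum
          = ∑ μ : Fin N, coeffP c μ * actP cs (u * pderiv μ v) := by
      intro u v
      simp only [actP_cons, Finset.mul_sum]
      rw [sum_map_finsum]
      refine Finset.sum_congr rfl fun μ _ => ?_
      simp only [mul_left_comm _ (coeffP c μ)]
      rw [List.sum_map_mul_left, ← ih]
    simp only [splits, List.map_append, List.sum_append, List.map_map, Function.comp_def]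
    rw [e, e2, actP_cons]
    simp only [pderiv_mul, actP_add, mul_add, Finset.sum_add_distrib]

lemma actP_peel (b : List SS) (s : SS) (rest : List SS) (h : RR) :
    actP (b ++ s :: rest) h
      = ∑ μ : Fin N, coeffP s μ * actP (b ++ rest) (pderiv μ h) := by
  induction b generalizing h with
  | nil => simp [actP_cons]
  | cons c b ih =>
    simp only [List.cons_append, actP_cons, ih, Finset.mul_sum]
    rw [Finset.sum_comm]
    refine Finset.sum_congr rfl fun μ _ => Finset.sum_congr rfl fun ν _ => ?_
    rw [pderiv_comm']
    ring
end

/-! ### Choices and attachment combinatorics -/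

def choicesFrom (vals : List ℕ) : ℕ → List (List ℕ)
  | 0 => [[]]
  | m + 1 => vals.flatMap fun v => (choicesFrom vals m).map (v :: ·)

lemma choices_eq (m n : ℕ) : choices m n = choicesFrom (List.range n) m := by
  induction m with
  | zero => rfl
  | succ m ih => simp [choices, choicesFrom, ih]

lemma mem_choicesFrom {vals : List ℕ} : ∀ {m : ℕ} {c : List ℕ}, c ∈ choicesFrom vals m →
    ∀ e ∈ c, e ∈ vals := by
  intro m
  induction m with
  | zero => intro c hc; simp [choicesFrom] at hc; simp [hc]
  | succ m ih =>
    intro c hc e he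
    simp only [choicesFrom, List.mem_flatMap, List.mem_map] at hc
    obtain ⟨v, hv, c', hc', rfl⟩ := hc
    rcases he with _ | he
    · exact hv
    · exact ih hc' e (by assumption)

lemma choicesFrom_singleton (j m : ℕ) : choicesFrom [j] m = [List.replicate m j] := by
  induction m with
  | zero => rfl
  | succ m ih => simp [choicesFrom, ih, List.replicate_succ]

lemma choicesFrom_perm_sum {M : Type*} [AddCommMonoid M] {vals vals' : List ℕ}
    (hp : vals.Perm vals') : ∀ (m : ℕ) (F : List ℕ → M),
    ((choicesFrom vals m).map F).sum = ((choicesFrom vals' m).map F).sum := by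
  intro m
  induction m with
  | zero => intro F; rfl
  | succ m ih =>
    intro F
    simp only [choicesFrom]
    rw [sum_map_flatMap, sum_map_flatMap]
    calc (vals.map fun v => (((choicesFrom vals m).map (v :: ·)).map F).sum).sum
        = (vals.map fun v => (((choicesFrom vals' m).map (v :: ·)).map F).sum).sum := by
          refine congrArg _ (List.map_congr_left fun v _ => ?_)
          simp only [List.map_map]
          exact ih _
      _ = (vals'.map fun v => (((choicesFrom vals' m).map (v :: ·)).map F).sum).sum :=
          (hp.map _).sum_eq

def attachFun {α : Type*} (a : List α) (c : List ℕ) : ℕ → List α :=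
  fun i => (a.zip c).filterMap fun p => if p.2 = i then some p.1 else none

lemma attachFun_nil {α : Type*} (c : List ℕ) : attachFun ([] : List α) c = fun _ => [] := rfl

lemma attachFun_cons {α : Type*} (p : α) (a : List α) (v : ℕ) (c : List ℕ) :
    attachFun (p :: a) (v :: c) =
      fun u => (if v = u then [p] else []) ++ attachFun a c u := by
  funext u
  simp only [attachFun, List.zip_cons_cons, List.filterMap_cons]
  by_cases h : v = u <;> simp [h]

lemma attachFun_not_mem {α : Type*} : ∀ (a : List α) (c : List ℕ) (u : ℕ), u ∉ c →
    attachFun a c u = [] := by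
  intro a
  induction a with
  | nil => intro c u _; rfl
  | cons p a ih =>
    intro c u hu
    cases c with
    | nil => rfl
    | cons v c =>
      rw [attachFun_cons]
      have hv : v ≠ u := fun h => hu (h ▸ List.mem_cons_self)
      have : u ∉ c := fun h => hu (List.mem_cons_of_mem _ h)
      simp [hv, ih c u this]

lemma attachFun_replicate {α : Type*} (j : ℕ) : ∀ (a : List α),
    attachFun a (List.replicate a.length j) j = a := by
  intro a
  induction a with
  | nil => rfl
  | cons p a ih => simp [List.replicate_succ, attachFun_cons, ih]

lemma choices_split {α : Type} {M : Type*} [AddCommMonoid M] (V W : List ℕ)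
    (hd : ∀ v ∈ V, v ∉ W) : ∀ (a : List α) (F : (ℕ → List α) → M),
    ((choicesFrom (V ++ W) a.length).map fun c => F (attachFun a c)).sum
    = ((splits a).map fun q : List α × List α =>
        ((choicesFrom V q.1.length).map fun c1 =>
          ((choicesFrom W q.2.length).map fun c2 =>
            F fun u => attachFun q.1 c1 u ++ attachFun q.2 c2 u).sum).sum).sum := by
  intro a
  induction a with
  | nil =>
    intro F
    simp [choicesFrom, splits, attachFun_nil]
  | cons p a ih =>
    intro F
    simp only [List.length_cons, choicesFrom]
    rw [sum_map_flatMap]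
    have step : ∀ v : ℕ,
        (((choicesFrom (V ++ W) a.length).map (v :: ·)).map fun c =>
            F (attachFun (p :: a) c)).sum
        = ((splits a).map fun q : List α × List α =>
            ((choicesFrom V q.1.length).map fun c1 =>
              ((choicesFrom W q.2.length).map fun c2 =>
                F fun u => (if v = u then [p] else []) ++
                  (attachFun q.1 c1 u ++ attachFun q.2 c2 u)).sum).sum).sum := by
      intro v
      simp only [List.map_map, Function.comp_def, attachFun_cons]
      exact ih (fun g => F fun u => (if v = u then [p] else []) ++ g u)
    rw [List.map_congr_left fun v _ => step v]
    -- split the outer sum over V ++ W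
    rw [List.map_append, List.sum_append]
    -- RHS: split `splits (p :: a)`
    conv_rhs => rw [splits]
    rw [List.map_append, List.sum_append, List.map_map, List.map_map]
    congr 1
    · -- V part
      rw [sum_map_swap]
      refine congrArg _ (List.map_congr_left fun q _ => ?_)
      simp only [Function.comp_def, List.length_cons, choicesFrom]
      rw [sum_map_flatMap]
      refine congrArg _ (List.map_congr_left fun v hv => ?_)
      simp only [List.map_map, Function.comp_def, attachFun_cons, List.append_assoc]
    · -- W part
      rw [sum_map_swap]
      refine congrArg _ (List.map_congr_left fun q _ => ?_)
      simp only [Function.comp_def, List.length_cons]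
      rw [sum_map_swap]
      refine congrArg _ (List.map_congr_left fun c1 hc1 => ?_)
      conv_rhs => rw [choicesFrom]
      rw [sum_map_flatMap]
      refine congrArg _ (List.map_congr_left fun v hv => ?_)
      simp only [List.map_map, Function.comp_def, attachFun_cons]
      refine congrArg _ (List.map_congr_left fun c2 hc2 => ?_)
      congr 1
      funext u
      by_cases h : v = u
      · subst h
        have hv' : v ∉ V := fun hmem => hd v hmem hv
        have hz : attachFun q.1 c1 v = [] :=
          attachFun_not_mem _ _ _ (fun hmem => hv' (mem_choicesFrom hc1 v hmem))
        simp [hz]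
      · simp [h]

/-! ### Sizes and graft congruence -/

@[simp] lemma sizeL_nil {D : Type} : sizeL ([] : List (LSub D)) = 0 := by simp [sizeL]

lemma sizeL_cons {D : Type} (s : LSub D) (ss : List (LSub D)) :
    sizeL (s :: ss) = sizeS s + sizeL ss := by simp [sizeL]

lemma sizeS_mk {D : Type} (d : D) (ts : List (LSub D)) :
    sizeS (.mk d ts) = 1 + sizeL ts := by simp [sizeS]

lemma sizeS_pos {D : Type} (s : LSub D) : 1 ≤ sizeS s := by
  cases s with | mk d ts => rw [sizeS_mk]; omega

@[simp] lemma graftL_nil {D : Type} (g : ℕ → List (LSub D)) (i : ℕ) :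
    graftL g i [] = [] := by simp [graftL]

lemma graftL_cons {D : Type} (g : ℕ → List (LSub D)) (i : ℕ) (s : LSub D)
    (ss : List (LSub D)) :
    graftL g i (s :: ss) = graftS g i s :: graftL g (i + sizeS s) ss := by
  simp [graftL]

lemma graftS_mk {D : Type} (g : ℕ → List (LSub D)) (i : ℕ) (d : D) (ts : List (LSub D)) :
    graftS g i (.mk d ts) = .mk d (g i ++ graftL g (i + 1) ts) := by simp [graftS]

lemma graftL_congr {D : Type} : ∀ (n : ℕ) (ts : List (LSub D)), sizeL ts ≤ n →
    ∀ (g g' : ℕ → List (LSub D)) (i : ℕ),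
    (∀ v, i ≤ v → v < i + sizeL ts → g v = g' v) → graftL g i ts = graftL g' i ts := by
  intro n
  induction n with
  | zero =>
    intro ts hts g g' i _
    cases ts with
    | nil => rfl
    | cons s ss => exfalso; rw [sizeL_cons] at hts; have := sizeS_pos s; omega
  | succ n ih =>
    intro ts hts g g' i hagree
    cases ts with
    | nil => rfl
    | cons s ss =>
      cases s with
      | mk E ts0 =>
        rw [sizeL_cons, sizeS_mk] at hts hagree
        have h1 : sizeL ts0 ≤ n := by omega
        have h2 : sizeL ss ≤ n := by omega
        rw [graftL_cons, graftL_cons, graftS_mk, graftS_mk, sizeS_mk]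
        have e0 : g i = g' i := hagree i le_rfl (by omega)
        have e1 : graftL g (i + 1) ts0 = graftL g' (i + 1) ts0 :=
          ih ts0 h1 g g' (i + 1) fun v hv1 hv2 => hagree v (by omega) (by omega)
        have e2 : graftL g (i + (1 + sizeL ts0)) ss = graftL g' (i + (1 + sizeL ts0)) ss :=
          ih ss h2 g g' _ fun v hv1 hv2 => hagree v (by omega) (by omega)
        rw [e0, e1, e2]

section
variable {k : Type} [Field k] {N : ℕ}
local notation "RR" => MvPolynomial (Fin N) k
local notation "SS" => LSub (Derivation k (MvPolynomial (Fin N) k) (MvPolynomial (Fin N) k))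

lemma main_nil (a : List SS) (j i : ℕ) (h : RR) :
    ((choicesFrom (j :: List.range' i (sizeL ([] : List SS))) a.length).map fun c =>
        actP (attachFun a c j ++ graftL (attachFun a c) i []) h).sum
      = actP a (actP ([] : List SS) h) := by
  simp only [sizeL_nil, List.range'_zero, graftL_nil, List.append_nil, actP_nil]
  rw [choicesFrom_singleton]
  simp [attachFun_replicate]

lemma mainMN : ∀ (n : ℕ) (ts : List SS), sizeL ts ≤ n → ∀ (a : List SS) (j i : ℕ), j < i →
    ∀ h : RR,
    ((choicesFrom (j :: List.range' i (sizeL ts)) a.length).map fun c =>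
        actP (attachFun a c j ++ graftL (attachFun a c) i ts) h).sum
    = actP a (actP ts h) := by
  intro n
  induction n with
  | zero =>
    intro ts hts a j i _ h
    cases ts with
    | nil => exact main_nil a j i h
    | cons s ss => exfalso; rw [sizeL_cons] at hts; have := sizeS_pos s; omega
  | succ n ih =>
    intro ts hts a j i hj h
    cases ts with
    | nil => exact main_nil a j i h
    | cons s ss =>
      cases s with
      | mk E ts0 =>
        rw [sizeL_cons, sizeS_mk] at hts
        have h1 : sizeL ts0 ≤ n := by omega
        have h2 : sizeL ss ≤ n := by omega
        have hvals : (j :: List.range' i (sizeL (LSub.mk E ts0 :: ss)))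
            = j :: (List.range' i (1 + sizeL ts0) ++ List.range' (i + (1 + sizeL ts0)) (sizeL ss)) := by
          rw [sizeL_cons, sizeS_mk]
          congr 1
          have e2 : 1 + sizeL ts0 + sizeL ss = sizeL ss + (1 + sizeL ts0) := by omega
          have e3 : i + (1 + sizeL ts0) = i + 1 * (1 + sizeL ts0) := by ring
          rw [e2, e3]
          rw [List.range'_append, Nat.add_comm (sizeL ss)]
        rw [hvals]
        rw [choicesFrom_perm_sum (List.perm_middle (l₁ := List.range' i (1 + sizeL ts0))
          (l₂ := List.range' (i + (1 + sizeL ts0)) (sizeL ss))).symm]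
        have hd : ∀ v ∈ List.range' i (1 + sizeL ts0), v ∉ (j :: List.range' (i + (1 + sizeL ts0)) (sizeL ss) : List ℕ) := by
          intro v hv
          rw [List.mem_range'_1] at hv
          intro hmem
          rcases List.mem_cons.mp hmem with rfl | hmem'
          · omega
          · rw [List.mem_range'_1] at hmem'; omega
        have split := choices_split (List.range' i (1 + sizeL ts0))
          (j :: List.range' (i + (1 + sizeL ts0)) (sizeL ss)) hd a
          (fun g => actP (g j ++ graftL g i (LSub.mk E ts0 :: ss)) h)
        beta_reduce at split
        rw [split]
        -- per-split computation
        have key : ∀ q ∈ splits a,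
            ((choicesFrom (List.range' i (1 + sizeL ts0)) q.1.length).map fun c1 =>
              ((choicesFrom (j :: List.range' (i + (1 + sizeL ts0)) (sizeL ss)) q.2.length).map fun c2 =>
                actP ((attachFun q.1 c1 j ++ attachFun q.2 c2 j) ++
                  graftL (fun u => attachFun q.1 c1 u ++ attachFun q.2 c2 u) i
                    (LSub.mk E ts0 :: ss)) h).sum).sum
            = ∑ μ : Fin N, actP q.1 (coeffP (LSub.mk E ts0) μ) *
                actP q.2 (actP ss (pderiv μ h)) := by
          intro q _
          have term : ∀ c1 ∈ choicesFrom (List.range' i (1 + sizeL ts0)) q.1.length,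
              ∀ c2 ∈ choicesFrom (j :: List.range' (i + (1 + sizeL ts0)) (sizeL ss)) q.2.length,
              actP ((attachFun q.1 c1 j ++ attachFun q.2 c2 j) ++
                  graftL (fun u => attachFun q.1 c1 u ++ attachFun q.2 c2 u) i
                    (LSub.mk E ts0 :: ss)) h
              = ∑ μ : Fin N, coeffP (graftS (attachFun q.1 c1) i (LSub.mk E ts0)) μ *
                  actP (attachFun q.2 c2 j ++
                    graftL (attachFun q.2 c2) (i + (1 + sizeL ts0)) ss) (pderiv μ h) := by
            intro c1 hc1 c2 hc2
            have hc1b : ∀ e ∈ c1, i ≤ e ∧ e < i + (1 + sizeL ts0) := fun e he => by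
              have := mem_choicesFrom hc1 e he
              rw [List.mem_range'_1] at this; exact this
            have hc2b : ∀ e ∈ c2, e = j ∨ i + (1 + sizeL ts0) ≤ e := fun e he => by
              have := mem_choicesFrom hc2 e he
              rcases List.mem_cons.mp this with rfl | hmem'
              · exact Or.inl rfl
              · rw [List.mem_range'_1] at hmem'; exact Or.inr hmem'.1
            have ej : attachFun q.1 c1 j ++ attachFun q.2 c2 j = attachFun q.2 c2 j := by
              rw [attachFun_not_mem q.1 c1 j (fun hm => by have := hc1b j hm; omega),
                List.nil_append]
            have eS : graftS (fun u => attachFun q.1 c1 u ++ attachFun q.2 c2 u) i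
                (LSub.mk E ts0) = graftS (attachFun q.1 c1) i (LSub.mk E ts0) := by
              rw [graftS_mk, graftS_mk]
              have ei : attachFun q.1 c1 i ++ attachFun q.2 c2 i = attachFun q.1 c1 i := by
                rw [attachFun_not_mem q.2 c2 i
                  (fun hm => by rcases hc2b i hm with h' | h' <;> omega), List.append_nil]
              have egl : graftL (fun u => attachFun q.1 c1 u ++ attachFun q.2 c2 u) (i + 1) ts0
                  = graftL (attachFun q.1 c1) (i + 1) ts0 := by
                refine graftL_congr (sizeL ts0) ts0 le_rfl _ _ _ fun v hv1 hv2 => ?_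
                rw [attachFun_not_mem q.2 c2 v
                  (fun hm => by rcases hc2b v hm with h' | h' <;> omega), List.append_nil]
              rw [ei, egl]
            have eL : graftL (fun u => attachFun q.1 c1 u ++ attachFun q.2 c2 u)
                (i + (1 + sizeL ts0)) ss
                = graftL (attachFun q.2 c2) (i + (1 + sizeL ts0)) ss := by
              refine graftL_congr (sizeL ss) ss le_rfl _ _ _ fun v hv1 hv2 => ?_
              rw [attachFun_not_mem q.1 c1 v
                (fun hm => by have := hc1b v hm; omega), List.nil_append]
            rw [graftL_cons, sizeS_mk, eS, eL, ej, actP_peel]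
          rw [List.map_congr_left fun c1 hc1 =>
            congrArg List.sum (List.map_congr_left fun c2 hc2 => term c1 hc1 c2 hc2)]
          -- push sums around
          have inner : ∀ c1 ∈ choicesFrom (List.range' i (1 + sizeL ts0)) q.1.length,
              ((choicesFrom (j :: List.range' (i + (1 + sizeL ts0)) (sizeL ss)) q.2.length).map fun c2 =>
                ∑ μ : Fin N, coeffP (graftS (attachFun q.1 c1) i (LSub.mk E ts0)) μ *
                  actP (attachFun q.2 c2 j ++
                    graftL (attachFun q.2 c2) (i + (1 + sizeL ts0)) ss) (pderiv μ h)).sum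
              = ∑ μ : Fin N, coeffP (graftS (attachFun q.1 c1) i (LSub.mk E ts0)) μ *
                  actP q.2 (actP ss (pderiv μ h)) := by
            intro c1 _
            rw [sum_map_finsum]
            refine Finset.sum_congr rfl fun μ _ => ?_
            rw [List.sum_map_mul_left]
            congr 1
            exact ih ss h2 q.2 j (i + (1 + sizeL ts0)) (by omega) (pderiv μ h)
          rw [List.map_congr_left inner, sum_map_finsum]
          refine Finset.sum_congr rfl fun μ _ => ?_
          rw [List.sum_map_mul_right]
          congr 1
          -- the c1-sum is the induction hypothesis for ts0
          have hVc : (List.range' i (1 + sizeL ts0) : List ℕ) = i :: List.range' (i + 1) (sizeL ts0) := by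
            rw [add_comm 1 (sizeL ts0), List.range'_succ]
          calc ((choicesFrom (List.range' i (1 + sizeL ts0)) q.1.length).map fun c1 =>
                coeffP (graftS (attachFun q.1 c1) i (LSub.mk E ts0)) μ).sum
              = ((choicesFrom (i :: List.range' (i + 1) (sizeL ts0)) q.1.length).map
                  fun c1 => actP (attachFun q.1 c1 i ++
                    graftL (attachFun q.1 c1) (i + 1) ts0) (E (X μ))).sum := by
                rw [← hVc]
                refine congrArg _ (List.map_congr_left fun c1 _ => ?_)
                rw [graftS_mk, coeffP_mk]
            _ = actP q.1 (actP ts0 (E (X μ))) :=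
                ih ts0 h1 q.1 i (i + 1) (by omega) (E (X μ))
            _ = actP q.1 (coeffP (LSub.mk E ts0) μ) := by rw [coeffP_mk]
        rw [List.map_congr_left key, sum_map_finsum]
        -- now compute the right-hand side
        rw [actP_cons, actP_finsum]
        refine Finset.sum_congr rfl fun μ _ => ?_
        rw [actP_mul]

lemma finsupp_list_sum (f : RR) : ∀ {β : Type} (l : List β)
    (G : β → LTree (Derivation k (MvPolynomial (Fin N) k) (MvPolynomial (Fin N) k))),
    ((l.map fun x => Finsupp.single (G x) (1 : k)).sum).sum (fun T c => c • actP T f)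
      = (l.map fun x => actP (G x) f).sum := by
  intro β l G
  induction l with
  | nil => simp
  | cons x l ih =>
    rw [List.map_cons, List.sum_cons, Finsupp.sum_add_index'
      (h := fun T c => c • actP T f) (fun a => zero_smul k _)
      (fun a b₁ b₂ => add_smul b₁ b₂ _), ih,
      Finsupp.sum_single_index (h := fun T c => c • actP T f) (zero_smul k _), one_smul, List.map_cons, List.sum_cons]

lemma part3 (T₁ T₂ : LTree (Derivation k (MvPolynomial (Fin N) k) (MvPolynomial (Fin N) k)))
    (f : MvPolynomial (Fin N) k) :
    ((mulT k T₁ T₂).sum fun T c => c • actP T f) = actP T₁ (actP T₂ f) := by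
  rw [mulT, finsupp_list_sum]
  have hr : List.range (1 + sizeL T₂) = 0 :: List.range' 1 (sizeL T₂) := by
    rw [List.range_eq_range', add_comm 1 (sizeL T₂), List.range'_succ]
  rw [choices_eq, hr]
  have := mainMN (sizeL T₂) T₂ le_rfl T₁ 0 1 one_pos f
  rw [← this]
  rfl
end

/-- **Proposition.** For `R = k[X₁,…,X_N]` the action `actP` of labeled trees makes `R`
into a left `kLT(𝔇)`-module algebra: the one-node tree acts as the identity, the action
of each tree is `k`-linear, it intertwines the tree-attachment product with composition,
and satisfies the module algebra condition with respect to the splitting coproduct. -/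
theorem polynomial_tree_action_is_module_algebra (k : Type) [Field k] [CharZero k] (N : ℕ) :
    (∀ f : MvPolynomial (Fin N) k, actP [] f = f) ∧
    (∀ (T : LTree (Derivation k (MvPolynomial (Fin N) k) (MvPolynomial (Fin N) k)))
        (a : k) (f g : MvPolynomial (Fin N) k),
      actP T (a • f + g) = a • actP T f + actP T g) ∧
    (∀ (T₁ T₂ : LTree (Derivation k (MvPolynomial (Fin N) k) (MvPolynomial (Fin N) k)))
        (f : MvPolynomial (Fin N) k),
      ((mulT k T₁ T₂).sum fun T c => c • actP T f) = actP T₁ (actP T₂ f)) ∧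
    (∀ (T : LTree (Derivation k (MvPolynomial (Fin N) k) (MvPolynomial (Fin N) k)))
        (f g : MvPolynomial (Fin N) k),
      actP T (f * g) = ((splits T).map fun q => actP q.1 f * actP q.2 g).sum) := by
  refine ⟨fun f => actP_nil f, fun T a f g => ?_, fun T₁ T₂ f => part3 T₁ T₂ f,
    fun T f g => actP_mul T f g⟩
  rw [actP_add, actP_smul]
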